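/- Let r: X → X̂ be an ε-projection onto a proper ε-net X̂, and for u ∈ F*_X define r(u)(x) := sup{u(y) : y ∈ r⁻¹(x)}. Then r(u) is a normal fuzzy set with finite support contained in X̂ (hence r(u) ∈ F̃*_{X̂}), and d_∞(u, r(u)) ≤ ε. In particular F̃*_{X̂} is an ε-net of (F*_X, d_∞) and r is an ε-projection. -/

import Mathlib

lemma aux_usc_sup {X : Type*} [MetricSpace X] {u : X → ℝ}
    (huc : UpperSemicontinuous u) {A : Set X} (hA : IsCompact A) {α : ℝ}
    (hne : ∀ β < α, ∃ y ∈ A, β ≤ u y) : ∃ y ∈ A, α ≤ u y := by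
  set C : ℕ → Set X := fun n => A ∩ {z | α - 1 / (n + 1) ≤ u z} with hC
  have hclosed : ∀ n, IsClosed (C n) := fun n =>
    hA.isClosed.inter (huc.isClosed_preimage (α - 1 / (n + 1)))
  have hcompact : ∀ n, IsCompact (C n) := fun n =>
    hA.inter_right (huc.isClosed_preimage (α - 1 / (n + 1)))
  have hpos : ∀ n : ℕ, (0 : ℝ) < 1 / (n + 1) := fun n => by positivity
  have hnonempty : ∀ n, (C n).Nonempty := by
    intro n
    obtain ⟨y, hyA, hy⟩ := hne (α - 1 / (n + 1)) (by linarith [hpos n])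
    exact ⟨y, hyA, hy⟩
  have hdec : ∀ n, C (n + 1) ⊆ C n := by
    intro n z hz
    obtain ⟨hz1, hz2⟩ := hz
    refine ⟨hz1, ?_⟩
    have h1 : (1 : ℝ) / (n + 1 + 1) ≤ 1 / (n + 1) := by
      apply one_div_le_one_div_of_le (by positivity); push_cast; linarith
    simp only [Set.mem_setOf_eq] at hz2 ⊢
    push_cast at hz2 ⊢
    linarith
  obtain ⟨y, hy⟩ := IsCompact.nonempty_iInter_of_sequence_nonempty_isCompact_isClosed
    C hdec hnonempty (hcompact 0) hclosed
  have hyA : y ∈ A := (Set.mem_iInter.1 hy 0).1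
  refine ⟨y, hyA, ?_⟩
  have hten : Filter.Tendsto (fun n : ℕ => α - 1 / (n + 1)) Filter.atTop (nhds α) := by
    have : Filter.Tendsto (fun n : ℕ => 1 / ((n : ℝ) + 1)) Filter.atTop (nhds 0) :=
      tendsto_one_div_add_atTop_nhds_zero_nat
    have h := Filter.Tendsto.const_sub α this
    simpa using h
  exact le_of_tendsto hten (Filter.Eventually.of_forall fun n => (Set.mem_iInter.1 hy n).2)

theorem stmt14 {X : Type*} [MetricSpace X] (ε : ℝ) (hε : 0 < ε) (Xhat : Set X)
    (hnet : ∀ x : X, ∃ y ∈ Xhat, dist x y ≤ ε)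
    (hproper : ∀ D : Set X, Bornology.IsBounded D → (D ∩ Xhat).Finite)
    (r : X → X) (hr_mem : ∀ x, r x ∈ Xhat) (hr_id : ∀ x ∈ Xhat, r x = x)
    (hr_dist : ∀ x, dist x (r x) ≤ ε)
    (u : X → ℝ)
    (hu01 : ∀ x, u x ∈ Set.Icc (0 : ℝ) 1) (hun : ∃ x, u x = 1)
    (huc : UpperSemicontinuous u) (hus : IsCompact (closure {x | 0 < u x}))
    (ru : X → ℝ) (hru : ∀ x, ru x = sSup (u '' {y | r y = x})) :
    (∃ x, ru x = 1) ∧ {x | 0 < ru x}.Finite ∧ {x | 0 < ru x} ⊆ Xhat ∧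
    (⨆ α ∈ Set.Ioc (0 : ℝ) 1,
        Metric.hausdorffDist {x | α ≤ u x} {x | α ≤ ru x}) ≤ ε := by
  have hbdd : ∀ x : X, BddAbove (u '' {y | r y = x}) := fun x =>
    ⟨1, fun a ⟨y, _, hy⟩ => hy ▸ (hu01 y).2⟩
  -- positivity transfer
  have hpos : ∀ x, 0 < ru x → ∃ y, r y = x ∧ 0 < u y := by
    intro x hx
    rw [hru] at hx
    have hne : (u '' {y | r y = x}).Nonempty := by
      by_contra h
      rw [Set.not_nonempty_iff_eq_empty] at h
      rw [h, Real.sSup_empty] at hx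
      exact lt_irrefl _ hx
    obtain ⟨a, ⟨y, hy, rfl⟩, ha⟩ := exists_lt_of_lt_csSup hne hx
    exact ⟨y, hy, ha⟩
  -- part 1 : normality
  obtain ⟨x0, hx0⟩ := hun
  have h1 : ∃ x, ru x = 1 := by
    refine ⟨r x0, ?_⟩
    rw [hru]
    apply le_antisymm
    · exact csSup_le ⟨u x0, ⟨x0, rfl, rfl⟩⟩ (fun a ⟨y, _, hy⟩ => hy ▸ (hu01 y).2)
    · rw [← hx0]
      exact le_csSup (hbdd _) ⟨x0, rfl, rfl⟩
  -- part 3 : support in Xhat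
  have hXhat : {x | 0 < ru x} ⊆ Xhat := by
    intro x hx
    obtain ⟨y, hy, _⟩ := hpos x hx
    exact hy ▸ hr_mem y
  -- part 2 : finiteness
  have hfin : {x | 0 < ru x}.Finite := by
    have hDb : Bornology.IsBounded (Metric.cthickening ε (closure {x | 0 < u x})) :=
      hus.isBounded.cthickening
    apply Set.Finite.subset (hproper _ hDb)
    intro x hx
    obtain ⟨y, hy, hy'⟩ := hpos x hx
    refine ⟨Metric.mem_cthickening_of_dist_le x y ε _ (subset_closure hy') ?_, hXhat hx⟩
    rw [← hy, dist_comm]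
    exact hr_dist y
  -- part 4 : Hausdorff distances
  have hHD : ∀ α ∈ Set.Ioc (0 : ℝ) 1,
      Metric.hausdorffDist {x | α ≤ u x} {x | α ≤ ru x} ≤ ε := by
    intro α hα
    apply Metric.hausdorffDist_le_of_mem_dist hε.le
    · intro y hy
      refine ⟨r y, ?_, hr_dist y⟩
      rw [Set.mem_setOf_eq, hru]
      exact le_trans hy (le_csSup (hbdd _) ⟨y, rfl, rfl⟩)
    · intro x hx
      rw [Set.mem_setOf_eq, hru] at hx
      have hne : (u '' {y | r y = x}).Nonempty := by
        by_contra h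
        rw [Set.not_nonempty_iff_eq_empty] at h
        rw [h, Real.sSup_empty] at hx
        exact absurd hx (not_le.mpr hα.1)
      -- the compact set where we look for the near-maximizer
      have hA : IsCompact (Metric.closedBall x ε ∩ closure {z | 0 < u z}) :=
        hus.inter_left Metric.isClosed_closedBall
      have hne' : ∀ β < α, ∃ y ∈ Metric.closedBall x ε ∩ closure {z | 0 < u z}, β ≤ u y := by
        intro β hβ
        have hβ' : max β (α / 2) < α := max_lt hβ (by linarith [hα.1])
        obtain ⟨a, ⟨y, hy, rfl⟩, ha⟩ := exists_lt_of_lt_csSup hne (lt_of_lt_of_le hβ' hx)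
        refine ⟨y, ⟨?_, subset_closure ?_⟩, le_of_lt (lt_of_le_of_lt (le_max_left _ _) ha)⟩
        · rw [Metric.mem_closedBall, ← hy]
          exact hr_dist y
        · exact lt_of_le_of_lt (le_trans (by linarith [hα.1] : (0:ℝ) ≤ α / 2) (le_max_right β (α / 2))) ha
      obtain ⟨y, ⟨hyb, _⟩, hyu⟩ := aux_usc_sup huc hA hne'
      exact ⟨y, hyu, by rw [dist_comm]; exact Metric.mem_closedBall.1 hyb⟩
  refine ⟨h1, hfin, hXhat, ?_⟩
  exact Real.iSup_le (fun α => Real.iSup_le (fun hα => hHD α hα) hε.le) hε.le
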